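/- Every module over a von Neumann regular ring is flat. -/

import Mathlib

def IsVonNeumannRegular (R : Type*) [Ring R] : Prop := ∀ x : R, ∃ y : R, x * y * x = x

/-- In a commutative VNR ring, every f.g. ideal contains an element acting as identity on it. -/
lemma exists_idem_gen {R : Type*} [CommRing R] (h : IsVonNeumannRegular R)
    (I : Ideal R) (hI : I.FG) : ∃ e ∈ I, ∀ x ∈ I, e * x = x := by
  refine Submodule.fg_induction (motive := fun J _ => ∃ e ∈ J, ∀ x ∈ J, e * x = x) ?_ ?_ I hI
  · intro a
    obtain ⟨y, hy⟩ := h a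
    refine ⟨y * a, Submodule.mem_span_singleton.mpr ⟨y, rfl⟩, ?_⟩
    intro x hx
    obtain ⟨r, rfl⟩ := Submodule.mem_span_singleton.mp hx
    simp only [smul_eq_mul]
    calc y * a * (r * a) = r * (a * y * a) := by ring
    _ = r * a := by rw [hy]
  · rintro J K _ _ ⟨e₁, he₁, hid₁⟩ ⟨e₂, he₂, hid₂⟩
    refine ⟨e₁ + e₂ - e₁ * e₂,
      sub_mem (add_mem (Submodule.mem_sup_left he₁) (Submodule.mem_sup_right he₂))
        (Submodule.mem_sup_left (Ideal.mul_mem_right _ _ he₁)), ?_⟩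
    intro x hx
    obtain ⟨a, ha, b, hb, rfl⟩ := Submodule.mem_sup.mp hx
    have h1 : e₁ * a = a := hid₁ a ha
    have h2 : e₂ * b = b := hid₂ b hb
    have h3 : e₁ * e₂ * a = e₂ * a := by rw [mul_comm e₁ e₂, mul_assoc, h1]
    have h4 : e₁ * e₂ * b = e₁ * b := by rw [mul_assoc, h2]
    linear_combination h1 + h2 - h3 - h4

theorem stmt_10 (R : Type*) [CommRing R] (h : IsVonNeumannRegular R)
    (M : Type*) [AddCommGroup M] [Module R M] : Module.Flat R M := by
  rw [Module.Flat.iff_rTensor_injective]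
  intro I hI
  obtain ⟨e, he, hid⟩ := exists_idem_gen h I hI
  -- splitting map R →ₗ I
  let g : R →ₗ[R] I :=
    { toFun := fun x => ⟨x * e, I.mul_mem_left x he⟩
      map_add' := by intro x y; ext; simp [add_mul]
      map_smul' := by intro r x; ext; simp [smul_eq_mul, mul_assoc] }
  have hgl : ∀ x : I, g (I.subtype x) = x := by
    rintro ⟨x, hx⟩
    ext
    simpa [g, mul_comm] using hid x hx
  have : Function.LeftInverse (LinearMap.rTensor M g) (LinearMap.rTensor M I.subtype) := by
    intro z
    rw [← LinearMap.rTensor_comp_apply]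
    have : g ∘ₗ I.subtype = LinearMap.id := by ext x; exact congrArg Subtype.val (hgl x)
    rw [this, LinearMap.rTensor_id, LinearMap.id_apply]
  exact this.injective
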